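/- A simplicial complex K obtained by iteratively attaching simplices along (possibly empty) proper faces, starting from a simplex, has the property that every full subcomplex K_I is a disjoint union of contractible complexes (in particular all H̃_p(K_I) vanish for p ≥ 1). -/

import Mathlib

/-- The sign `ε(i, σ) = (-1)^{#{j ∈ σ : j < i}}`. -/
def eps {V : Type*} [LinearOrder V] (i : V) (σ : Finset V) : ℤ :=
  (-1) ^ (σ.filter (fun j => j < i)).card

/-- The augmented (reduced) simplicial chain module on finite subsets of `V`. -/
abbrev Ch (V : Type*) := Finset V →₀ ℤ

/-- The simplicial boundary `∂(σ) = Σ_{i ∈ σ} ε(i,σ) (σ \ {i})`. -/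
noncomputable def bdry {V : Type*} [LinearOrder V] (x : Ch V) : Ch V :=
  x.sum fun σ c => ∑ i ∈ σ, (c * eps i σ) • Finsupp.single (σ.erase i) 1

/-- The class of simplicial complexes obtained by iteratively attaching a simplex
along a (possibly empty) face, starting from a simplex: a simplex (the full power set
of a vertex set) belongs to the class, and if `K'` belongs to the class, `σ ∈ K'` is a
face, and `T` is the vertex set of a new simplex with `σ ⊂ T` a proper face of it
meeting the old complex exactly in `σ`, then `K' ∪ Δ_T` belongs to the class. -/
inductive GluedFromSimplices {V : Type*} [DecidableEq V] : Finset (Finset V) → Prop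
  | simplex (S : Finset V) : GluedFromSimplices S.powerset
  | glue (K : Finset (Finset V)) (σ T : Finset V) :
      GluedFromSimplices K → σ ∈ K → σ ⊂ T → (∀ τ ∈ K, τ ∩ T ⊆ σ) →
      GluedFromSimplices (K ∪ T.powerset)

section Eps
variable {V : Type*} [LinearOrder V]

lemma eps_sq (i : V) (σ : Finset V) : eps i σ * eps i σ = 1 := by
  unfold eps; rw [← mul_pow]; norm_num

lemma eps_insert (i : V) {v : V} {σ : Finset V} (h : v ∉ σ) :
    eps i (insert v σ) = (if v < i then -1 else 1) * eps i σ := by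
  unfold eps
  rw [Finset.filter_insert]
  split_ifs with hvi
  · rw [Finset.card_insert_of_notMem (fun hc => h (Finset.mem_of_mem_filter _ hc)), pow_succ]
    ring
  · rw [one_mul]

lemma eps_insert_self (v : V) (σ : Finset V) : eps v (insert v σ) = eps v σ := by
  unfold eps; rw [Finset.filter_insert, if_neg (lt_irrefl v)]

lemma eps_erase_self {v : V} {σ : Finset V} (hv : v ∈ σ) : eps v (σ.erase v) = eps v σ := by
  conv_rhs => rw [← Finset.insert_erase hv]
  rw [eps_insert_self]

/-- Antisymmetry of the double-sign, for `∂∂ = 0`. -/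
lemma eps_anticomm {i j : V} {σ : Finset V} (hij : i ≠ j) (hi : i ∈ σ) (hj : j ∈ σ) :
    eps i σ * eps j (σ.erase i) = -(eps j σ * eps i (σ.erase j)) := by
  set ρ := (σ.erase i).erase j with hρ
  have hjρ : j ∉ ρ := Finset.notMem_erase _ _
  have hiρ : i ∉ ρ := by
    rw [hρ, Finset.erase_right_comm]; exact Finset.notMem_erase _ _
  have h1 : σ.erase i = insert j ρ := by
    rw [hρ, Finset.insert_erase (Finset.mem_erase.mpr ⟨hij.symm, hj⟩)]
  have h2 : σ.erase j = insert i ρ := by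
    rw [hρ, Finset.erase_right_comm,
      Finset.insert_erase (Finset.mem_erase.mpr ⟨hij, hi⟩)]
  have h3 : eps i σ = (if j < i then -1 else 1) * eps i ρ := by
    conv_lhs => rw [← Finset.insert_erase hi, h1]
    rw [← Finset.insert_comm, eps_insert i (by simp [hjρ, hij.symm] : j ∉ insert i ρ),
      eps_insert_self]
  have h4 : eps j σ = (if i < j then -1 else 1) * eps j ρ := by
    conv_lhs => rw [← Finset.insert_erase hj, h2]
    rw [← Finset.insert_comm, eps_insert j (by simp [hiρ, hij] : i ∉ insert j ρ),
      eps_insert_self]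
  rw [h1, h2, eps_insert_self, eps_insert_self, h3, h4]
  rcases hij.lt_or_gt with h | h
  · rw [if_neg (asymm h), if_pos h]; ring
  · rw [if_pos h, if_neg (asymm h)]; ring

/-- The sign identity behind the cone homotopy. -/
lemma eps_cone {i v : V} {σ : Finset V} (hi : i ∈ σ) (hv : v ∉ σ) (hiv : i ≠ v) :
    eps v σ * eps i (insert v σ) + eps i σ * eps v (σ.erase i) = 0 := by
  set ρ := σ.erase i with hρ
  have hiρ : i ∉ ρ := Finset.notMem_erase _ _
  have hvρ : v ∉ ρ := fun hc => hv (Finset.mem_of_mem_erase hc)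
  have h0 : σ = insert i ρ := (Finset.insert_erase hi).symm
  have h1 : eps v σ = (if i < v then -1 else 1) * eps v ρ := by
    rw [h0, eps_insert v hiρ]
  have h2 : eps i σ = eps i ρ := by rw [h0, eps_insert_self]
  have h3 : eps i (insert v σ) = (if v < i then -1 else 1) * eps i ρ := by
    rw [h0, Finset.insert_comm, eps_insert_self, eps_insert i hvρ]
  rw [h1, h2, h3]
  rcases hiv.lt_or_gt with h | h
  · rw [if_pos h, if_neg (asymm h)]; ring
  · rw [if_neg (asymm h), if_pos h]; ring

end Eps

section Chain
variable {V : Type*} [LinearOrder V]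

lemma bdry_zero : bdry (0 : Ch V) = 0 := Finsupp.sum_zero_index

lemma bdry_single (σ : Finset V) (c : ℤ) :
    bdry (Finsupp.single σ c) = ∑ i ∈ σ, Finsupp.single (σ.erase i) (c * eps i σ) := by
  unfold bdry
  rw [Finsupp.sum_single_index (by simp)]
  exact Finset.sum_congr rfl fun i _ => by rw [Finsupp.smul_single, smul_eq_mul, mul_one]

lemma bdry_add (x y : Ch V) : bdry (x + y) = bdry x + bdry y := by
  unfold bdry
  apply Finsupp.sum_add_index' (fun σ => by simp)
  intro σ c d
  rw [← Finset.sum_add_distrib]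
  exact Finset.sum_congr rfl fun i _ => by rw [add_mul, add_smul]

noncomputable def bdryHom : Ch V →+ Ch V := AddMonoidHom.mk' bdry bdry_add

lemma bdry_sum {ι : Type*} (s : Finset ι) (f : ι → Ch V) :
    bdry (∑ i ∈ s, f i) = ∑ i ∈ s, bdry (f i) := map_sum bdryHom f s

noncomputable def cone (v : V) (x : Ch V) : Ch V :=
  x.sum fun σ c => if v ∈ σ then 0 else Finsupp.single (insert v σ) (c * eps v σ)

lemma cone_zero (v : V) : cone v (0 : Ch V) = 0 := Finsupp.sum_zero_index

lemma cone_single (v : V) (σ : Finset V) (c : ℤ) :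
    cone v (Finsupp.single σ c) =
      if v ∈ σ then 0 else Finsupp.single (insert v σ) (c * eps v σ) :=
  Finsupp.sum_single_index (by split_ifs <;> simp)

lemma cone_add (v : V) (x y : Ch V) : cone v (x + y) = cone v x + cone v y := by
  unfold cone
  apply Finsupp.sum_add_index' (fun σ => by split_ifs <;> simp)
  intro σ c d
  split_ifs <;> simp [add_mul, Finsupp.single_add]

noncomputable def coneHom (v : V) : Ch V →+ Ch V := AddMonoidHom.mk' (cone v) (cone_add v)

lemma cone_sum (v : V) {ι : Type*} (s : Finset ι) (f : ι → Ch V) :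
    cone v (∑ i ∈ s, f i) = ∑ i ∈ s, cone v (f i) := map_sum (coneHom v) f s

lemma support_bdry (x : Ch V) :
    ∀ ρ ∈ (bdry x).support, ∃ τ ∈ x.support, ρ ⊆ τ ∧ ρ.card + 1 = τ.card := by
  intro ρ hρ
  unfold bdry at hρ
  obtain ⟨τ, hτ, hρ2⟩ := Finset.mem_biUnion.mp (Finsupp.support_sum hρ)
  obtain ⟨i, hi, hρ3⟩ := Finset.mem_biUnion.mp (Finsupp.support_finset_sum hρ2)
  have : ρ ∈ (Finsupp.single (τ.erase i) (x τ * eps i τ * 1)).support := by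
    rwa [Finsupp.smul_single, smul_eq_mul] at hρ3
  have hρτ : ρ = τ.erase i := Finset.mem_singleton.mp (Finsupp.support_single_subset this)
  refine ⟨τ, hτ, hρτ ▸ Finset.erase_subset _ _, ?_⟩
  rw [hρτ, Finset.card_erase_of_mem hi]
  have : 0 < τ.card := Finset.card_pos.mpr ⟨i, hi⟩
  omega

lemma support_cone (v : V) (x : Ch V) :
    ∀ ρ ∈ (cone v x).support, ∃ τ ∈ x.support, v ∉ τ ∧ ρ = insert v τ := by
  intro ρ hρ
  unfold cone at hρ
  obtain ⟨τ, hτ, hρ2⟩ := Finset.mem_biUnion.mp (Finsupp.support_sum hρ)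
  by_cases hv : v ∈ τ
  · rw [if_pos hv] at hρ2; simp at hρ2
  · rw [if_neg hv] at hρ2
    exact ⟨τ, hτ, hv, Finset.mem_singleton.mp (Finsupp.support_single_subset hρ2)⟩

lemma cone_bdry_single (v : V) (σ : Finset V) (c : ℤ) :
    bdry (cone v (Finsupp.single σ c)) + cone v (bdry (Finsupp.single σ c)) =
      Finsupp.single σ c := by
  rw [cone_single, bdry_single, cone_sum]
  by_cases hv : v ∈ σ
  · rw [if_pos hv, bdry_zero, zero_add]
    rw [Finset.sum_eq_single_of_mem v hv
      (fun i hi hiv => by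
        rw [cone_single, if_pos (Finset.mem_erase.mpr ⟨Ne.symm hiv, hv⟩)])]
    rw [cone_single, if_neg (Finset.notMem_erase _ _), Finset.insert_erase hv,
      eps_erase_self hv, mul_assoc, eps_sq, mul_one]
  · rw [if_neg hv, bdry_single, Finset.sum_insert hv, Finset.erase_insert hv,
      eps_insert_self, mul_assoc, eps_sq, mul_one, add_assoc, ← Finset.sum_add_distrib]
    conv_lhs =>
      rw [Finset.sum_congr rfl (fun i hi => by
        rw [cone_single, if_neg (fun hc => hv (Finset.mem_of_mem_erase hc)),
          Finset.erase_insert_of_ne (fun h : v = i => hv (h ▸ hi)),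
          ← Finsupp.single_add,
          show c * eps v σ * eps i (insert v σ) + c * eps i σ * eps v (σ.erase i)
            = c * (eps v σ * eps i (insert v σ) + eps i σ * eps v (σ.erase i)) from by ring,
          eps_cone hi hv (fun h : i = v => hv (h ▸ hi)), mul_zero, Finsupp.single_zero])]
    rw [Finset.sum_const_zero, add_zero]

lemma cone_bdry (v : V) (x : Ch V) : bdry (cone v x) + cone v (bdry x) = x := by
  induction x using Finsupp.induction with
  | zero => simp [bdry_zero, cone_zero]
  | single_add σ c f hσ hc ih =>
    rw [cone_add, bdry_add, bdry_add, cone_add]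
    rw [show bdry (cone v (Finsupp.single σ c)) + bdry (cone v f) +
      (cone v (bdry (Finsupp.single σ c)) + cone v (bdry f)) =
      (bdry (cone v (Finsupp.single σ c)) + cone v (bdry (Finsupp.single σ c))) +
      (bdry (cone v f) + cone v (bdry f)) from by abel,
      cone_bdry_single, ih]

lemma bdry_bdry (x : Ch V) : bdry (bdry x) = 0 := by
  have hsingle : ∀ (σ : Finset V) (c : ℤ), bdry (bdry (Finsupp.single σ c)) = 0 := by
    intro σ c
    rw [bdry_single, bdry_sum]
    conv_lhs => rw [Finset.sum_congr rfl (fun i _ => bdry_single _ _)]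
    set S := ∑ i ∈ σ, ∑ j ∈ σ.erase i,
      Finsupp.single ((σ.erase i).erase j) (c * eps i σ * eps j (σ.erase i)) with hS
    have hterm : ∀ i ∈ σ, ∀ j ∈ σ.erase i,
        Finsupp.single ((σ.erase i).erase j) (c * eps i σ * eps j (σ.erase i))
          = -Finsupp.single ((σ.erase j).erase i) (c * eps j σ * eps i (σ.erase j)) := by
      intro i hi j hj
      conv_lhs => rw [Finset.erase_right_comm]
      rw [← Finsupp.single_neg]
      congr 1
      linear_combination c * eps_anticomm (Finset.ne_of_mem_erase hj).symm hi
        (Finset.mem_of_mem_erase hj)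
    have hneg : S = -S := by
      calc S = ∑ i ∈ σ, ∑ j ∈ σ.erase i,
            -Finsupp.single ((σ.erase j).erase i) (c * eps j σ * eps i (σ.erase j)) :=
          Finset.sum_congr rfl fun i hi => Finset.sum_congr rfl fun j hj => hterm i hi j hj
        _ = -∑ i ∈ σ, ∑ j ∈ σ.erase i,
            Finsupp.single ((σ.erase j).erase i) (c * eps j σ * eps i (σ.erase j)) := by
          simp [Finset.sum_neg_distrib]
        _ = -S := by
          congr 1
          rw [Finset.sum_comm' (fun i j => by
            constructor
            · rintro ⟨hi, hj⟩
              exact ⟨Finset.mem_erase.mpr ⟨(Finset.ne_of_mem_erase hj).symm, hi⟩,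
                Finset.mem_of_mem_erase hj⟩
            · rintro ⟨hi, hj⟩
              exact ⟨Finset.mem_of_mem_erase hi,
                Finset.mem_erase.mpr ⟨(Finset.ne_of_mem_erase hi).symm, hj⟩⟩)]
    have h2 : S + S = 0 := by nth_rewrite 1 [hneg]; simp
    ext ρ
    have := congrArg (fun z => z ρ) h2
    simp only [Finsupp.add_apply, Finsupp.coe_zero, Pi.zero_apply] at this ⊢
    omega
  induction x using Finsupp.induction with
  | zero => rw [bdry_zero, bdry_zero]
  | single_add σ c f hσ hc ih =>
    rw [bdry_add, bdry_add, hsingle, ih, add_zero]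

end Chain

lemma glued_lowerSet {V : Type*} [DecidableEq V] {K : Finset (Finset V)}
    (hK : GluedFromSimplices K) :
    ∀ τ σ : Finset V, τ ⊆ σ → σ ∈ K → τ ∈ K := by
  induction hK with
  | simplex S =>
    intro τ σ hts hσ
    exact Finset.mem_powerset.mpr (hts.trans (Finset.mem_powerset.mp hσ))
  | glue K σ₀ T hK' hσK hst hint ih =>
    intro τ σ hts hσ
    rcases Finset.mem_union.mp hσ with h | h
    · exact Finset.mem_union_left _ (ih τ σ hts h)
    · exact Finset.mem_union_right _
        (Finset.mem_powerset.mpr (hts.trans (Finset.mem_powerset.mp h)))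

set_option maxHeartbeats 1000000 in
theorem glued_full_subcomplexes_no_higher_homology' {V : Type*} [LinearOrder V]
    (K : Finset (Finset V)) (hK : GluedFromSimplices K) :
    ∀ (I : Finset V) (p : ℕ), 1 ≤ p →
      ∀ x : Ch V, (∀ σ ∈ x.support, σ ∈ K ∧ σ ⊆ I ∧ σ.card = p + 1) → bdry x = 0 →
        ∃ y : Ch V, (∀ σ ∈ y.support, σ ∈ K ∧ σ ⊆ I ∧ σ.card = p + 2) ∧ bdry y = x := by
  induction hK with
  | simplex S =>
    intro I p hp x hx hcyc
    by_cases hx0 : x = 0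
    · exact ⟨0, by simp, by rw [hx0, bdry_zero]⟩
    · obtain ⟨σ0, hσ0⟩ := Finsupp.support_nonempty_iff.mpr hx0
      obtain ⟨hσ0K, hσ0I, hσ0c⟩ := hx σ0 hσ0
      have hne : σ0.Nonempty := Finset.card_pos.mp (by omega)
      obtain ⟨v, hv⟩ := hne
      refine ⟨cone v x, ?_, ?_⟩
      · intro ρ hρ
        obtain ⟨τ, hτ, hvτ, rfl⟩ := support_cone v x ρ hρ
        obtain ⟨hτK, hτI, hτc⟩ := hx τ hτ
        refine ⟨Finset.mem_powerset.mpr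
          (Finset.insert_subset (Finset.mem_powerset.mp hσ0K hv) (Finset.mem_powerset.mp hτK)),
          Finset.insert_subset (hσ0I hv) hτI, ?_⟩
        rw [Finset.card_insert_of_notMem hvτ, hτc]
      · have h := cone_bdry v x
        rwa [hcyc, cone_zero, add_zero] at h
  | glue K σ T hK' hσK hσT hint ih =>
    intro I p hp x hx hcyc
    classical
    set xK := x.filter (· ∈ K) with hxK
    set xT := x.filter (fun τ => ¬ τ ∈ K) with hxT
    have hxsplit : xK + xT = x := Finsupp.filter_pos_add_filter_neg x _
    have hsuppK : ∀ τ ∈ xK.support, τ ∈ x.support ∧ τ ∈ K := by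
      intro τ hτ
      rw [hxK, Finsupp.support_filter, Finset.mem_filter] at hτ
      exact hτ
    have hsuppT : ∀ τ ∈ xT.support, τ ∈ x.support ∧ τ ∉ K := by
      intro τ hτ
      rw [hxT, Finsupp.support_filter, Finset.mem_filter] at hτ
      exact hτ
    have hTsub : ∀ τ ∈ xT.support, τ ⊆ T ∩ I ∧ τ.card = p + 1 := by
      intro τ hτ
      obtain ⟨hτx, hτK⟩ := hsuppT τ hτ
      obtain ⟨hτ1, hτ2, hτ3⟩ := hx τ hτx
      rcases Finset.mem_union.mp hτ1 with h | h
      · exact absurd h hτK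
      · exact ⟨Finset.subset_inter (Finset.mem_powerset.mp h) hτ2, hτ3⟩
    by_cases hxT0 : xT = 0
    · have hxeq : x = xK := by rw [← hxsplit, hxT0, add_zero]
      obtain ⟨y, hy, hby⟩ := ih I p hp x
        (fun τ hτ => ⟨(hsuppK τ (hxeq ▸ hτ)).2, (hx τ hτ).2⟩) hcyc
      exact ⟨y, fun τ hτ => ⟨Finset.mem_union_left _ (hy τ hτ).1, (hy τ hτ).2⟩, hby⟩
    · -- xT ≠ 0
      have hbxT : bdry xK + bdry xT = 0 := by rw [← bdry_add, hxsplit, hcyc]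
      have hbxTK : bdry xT = -bdry xK := eq_neg_of_add_eq_zero_right hbxT
      have hbd_supp : ∀ ρ ∈ (bdry xT).support, ρ ∈ K ∧ ρ ⊆ σ ∩ I ∧ ρ.card = p := by
        intro ρ hρ
        obtain ⟨τ, hτ, hsub, hcard⟩ := support_bdry xT ρ hρ
        have hρK' : ρ ∈ (bdry xK).support := by
          rw [hbxTK, Finsupp.support_neg] at hρ; exact hρ
        obtain ⟨τ', hτ', hsub', _⟩ := support_bdry xK ρ hρK'
        have hρinK : ρ ∈ K := glued_lowerSet hK' ρ τ' hsub' (hsuppK τ' hτ').2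
        obtain ⟨hτTI, hτc⟩ := hTsub τ hτ
        have hρT : ρ ⊆ T := hsub.trans (hτTI.trans Finset.inter_subset_left)
        have hρσ : ρ ⊆ σ := by
          have h5 := hint ρ hρinK
          rwa [Finset.inter_eq_left.mpr hρT] at h5
        exact ⟨hρinK,
          Finset.subset_inter hρσ (hsub.trans (hτTI.trans Finset.inter_subset_right)),
          by omega⟩
      obtain ⟨v, hvT, hvI, hvσ⟩ : ∃ v, v ∈ T ∧ v ∈ I ∧ (bdry xT ≠ 0 → v ∈ σ) := by
        by_cases hb : bdry xT = 0
        · obtain ⟨τ0, hτ0⟩ := Finsupp.support_nonempty_iff.mpr hxT0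
          obtain ⟨hτTI, hτc⟩ := hTsub τ0 hτ0
          obtain ⟨v, hv⟩ : τ0.Nonempty := Finset.card_pos.mp (by omega)
          exact ⟨v, (Finset.mem_inter.mp (hτTI hv)).1, (Finset.mem_inter.mp (hτTI hv)).2,
            fun h => absurd hb h⟩
        · obtain ⟨ρ, hρ⟩ := Finsupp.support_nonempty_iff.mpr hb
          obtain ⟨hρK, hρσI, hρc⟩ := hbd_supp ρ hρ
          obtain ⟨v, hv⟩ : ρ.Nonempty := Finset.card_pos.mp (by omega)
          have hvσI := hρσI hv
          exact ⟨v, hσT.subset (Finset.mem_inter.mp hvσI).1, (Finset.mem_inter.mp hvσI).2,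
            fun _ => (Finset.mem_inter.mp hvσI).1⟩
      set z := cone v (bdry xT) with hz
      have hbz : bdry z = bdry xT := by
        have h := cone_bdry v (bdry xT)
        rwa [bdry_bdry, cone_zero, add_zero] at h
      have hx'cyc : bdry (xK + z) = 0 := by rw [bdry_add, hbz, hbxT]
      have hx'supp : ∀ ρ ∈ (xK + z).support, ρ ∈ K ∧ ρ ⊆ I ∧ ρ.card = p + 1 := by
        intro ρ hρ
        rcases Finset.mem_union.mp (Finsupp.support_add hρ) with h | h
        · obtain ⟨hρx, hρK⟩ := hsuppK ρ h
          exact ⟨hρK, (hx ρ hρx).2⟩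
        · obtain ⟨ρ', hρ', hvρ', rfl⟩ := support_cone v (bdry xT) ρ h
          have hbne : bdry xT ≠ 0 := Finsupp.support_nonempty_iff.mp ⟨ρ', hρ'⟩
          have hvs := hvσ hbne
          obtain ⟨hρ'K, hρ'σI, hρ'c⟩ := hbd_supp ρ' hρ'
          have hsubσ : insert v ρ' ⊆ σ :=
            Finset.insert_subset hvs (hρ'σI.trans Finset.inter_subset_left)
          refine ⟨glued_lowerSet hK' _ σ hsubσ hσK,
            Finset.insert_subset hvI (hρ'σI.trans Finset.inter_subset_right), ?_⟩
          rw [Finset.card_insert_of_notMem hvρ', hρ'c]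
      obtain ⟨yK, hyK, hbyK⟩ := ih I p hp (xK + z) hx'supp hx'cyc
      refine ⟨yK + cone v xT, ?_, ?_⟩
      · intro ρ hρ
        rcases Finset.mem_union.mp (Finsupp.support_add hρ) with h | h
        · exact ⟨Finset.mem_union_left _ (hyK ρ h).1, (hyK ρ h).2⟩
        · obtain ⟨τ, hτ, hvτ, rfl⟩ := support_cone v xT ρ h
          obtain ⟨hτTI, hτc⟩ := hTsub τ hτ
          refine ⟨Finset.mem_union_right _ (Finset.mem_powerset.mpr
            (Finset.insert_subset hvT (hτTI.trans Finset.inter_subset_left))),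
            Finset.insert_subset hvI (hτTI.trans Finset.inter_subset_right), ?_⟩
          rw [Finset.card_insert_of_notMem hvτ, hτc]
      · rw [bdry_add, hbyK]
        have h2 := cone_bdry v xT
        rw [show xK + z + bdry (cone v xT) = xK + (bdry (cone v xT) + cone v (bdry xT)) from by
          rw [hz]; abel, h2, hxsplit]

/-- A simplicial complex obtained by iteratively attaching simplices along (possibly
empty) proper faces, starting from a simplex, has the property that every full
subcomplex `K_I` is a disjoint union of contractible complexes; in particular all
`H̃_p(K_I)` vanish for `p ≥ 1`: every reduced `p`-cycle of `K_I` is a boundary. -/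
theorem glued_full_subcomplexes_no_higher_homology {V : Type*} [LinearOrder V]
    (K : Finset (Finset V)) (hK : GluedFromSimplices K) :
    ∀ (I : Finset V) (p : ℕ), 1 ≤ p →
      ∀ x : Ch V, (∀ σ ∈ x.support, σ ∈ K ∧ σ ⊆ I ∧ σ.card = p + 1) → bdry x = 0 →
        ∃ y : Ch V, (∀ σ ∈ y.support, σ ∈ K ∧ σ ⊆ I ∧ σ.card = p + 2) ∧ bdry y = x := by
  exact glued_full_subcomplexes_no_higher_homology' K hK
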